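/- The number of idempotent n×n matrices over F_q with rank j equals γ_n / (γ_j · γ_{n-j}), the number of ordered direct sum decompositions F_q^n = U ⊕ W with dim U = j. -/

import Mathlib

open Module Submodule LinearMap
-- helper 1: basis transport along a linear equiv
noncomputable def basisCongr {F V V' : Type*} [Field F] [AddCommGroup V] [Module F V]
    [AddCommGroup V'] [Module F V'] {ι : Type*} (e : V ≃ₗ[F] V') :
    Basis ι F V ≃ Basis ι F V' where
  toFun b := b.map e
  invFun b := b.map e.symm
  left_inv b := Basis.eq_of_apply_eq fun i => by simp [Basis.map_apply]
  right_inv b := Basis.eq_of_apply_eq fun i => by simp [Basis.map_apply]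

-- helper 2: card of bases of (Fin m → F)
lemma card_basis_fun (F : Type*) [Field F] [Fintype F] (m : ℕ) :
    Nat.card (Basis (Fin m) F (Fin m → F)) =
      ∏ i ∈ Finset.range m, (Fintype.card F ^ m - Fintype.card F ^ i) := by
  rcases Nat.eq_zero_or_pos m with rfl | hm
  · have : Subsingleton (Basis (Fin 0) F (Fin 0 → F)) :=
      ⟨fun a b => Basis.eq_of_apply_eq (fun i => Fin.elim0 i)⟩
    have : Unique (Basis (Fin 0) F (Fin 0 → F)) := uniqueOfSubsingleton (Pi.basisFun F (Fin 0))
    simp [Nat.card_unique]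
  · have : Nonempty (Fin m) := Fin.pos_iff_nonempty.1 hm
    have hfr : finrank F (Fin m → F) = m := by simp
    have e : Basis (Fin m) F (Fin m → F) ≃ {s : Fin m → (Fin m → F) // LinearIndependent F s} :=
      { toFun := fun b => ⟨b, b.linearIndependent⟩
        invFun := fun s => basisOfLinearIndependentOfCardEqFinrank s.2 (by simp [hfr])
        left_inv := fun b => Basis.eq_of_apply_eq fun i => by
          simp [coe_basisOfLinearIndependentOfCardEqFinrank]
        right_inv := fun s => Subtype.ext <| by
          simp [coe_basisOfLinearIndependentOfCardEqFinrank] }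
    rw [Nat.card_congr e, card_linearIndependent (le_of_eq (by simp))]
    rw [Fin.prod_univ_eq_prod_range (fun i => Fintype.card F ^ finrank F (Fin m → F) - Fintype.card F ^ i), hfr]

variable {F : Type} [Field F] {n j : ℕ}

lemma decomp_isCompl (b : Basis (Fin j ⊕ Fin (n-j)) F (Fin n → F)) :
    IsCompl (span F (Set.range (b ∘ Sum.inl))) (span F (Set.range (b ∘ Sum.inr))) := by
  constructor
  · rw [Set.range_comp, Set.range_comp]
    exact b.linearIndependent.disjoint_span_image Set.isCompl_range_inl_range_inr.disjoint
  · rw [codisjoint_iff, ← span_union, Set.range_comp, Set.range_comp, ← Set.image_union,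
      Set.range_inl_union_range_inr, Set.image_univ, b.span_eq]

noncomputable def decompOfBasis (b : Basis (Fin j ⊕ Fin (n-j)) F (Fin n → F)) :
    {p : Submodule F (Fin n → F) × Submodule F (Fin n → F) //
        IsCompl p.1 p.2 ∧ Module.finrank F p.1 = j} :=
  ⟨(span F (Set.range (b ∘ Sum.inl)), span F (Set.range (b ∘ Sum.inr))),
    decomp_isCompl b, by
      rw [finrank_eq_card_basis (Basis.span (b.linearIndependent.comp Sum.inl Sum.inl_injective)),
        Fintype.card_fin]⟩

noncomputable def fiberEquiv (p : {p : Submodule F (Fin n → F) × Submodule F (Fin n → F) //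
        IsCompl p.1 p.2 ∧ Module.finrank F p.1 = j}) :
    {b : Basis (Fin j ⊕ Fin (n-j)) F (Fin n → F) // decompOfBasis b = p} ≃
      Basis (Fin j) F p.1.1 × Basis (Fin (n-j)) F p.1.2 where
  toFun b :=
    (Basis.map (Basis.span (b.1.linearIndependent.comp Sum.inl Sum.inl_injective))
      (LinearEquiv.ofEq _ _ (congrArg (fun x => x.1.1) b.2)),
     Basis.map (Basis.span (b.1.linearIndependent.comp Sum.inr Sum.inr_injective))
      (LinearEquiv.ofEq _ _ (congrArg (fun x => x.1.2) b.2)))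
  invFun bp := by
    refine ⟨(bp.1.prod bp.2).map (prodEquivOfIsCompl p.1.1 p.1.2 p.2.1), ?_⟩
    have h1 : ∀ i, ((bp.1.prod bp.2).map (prodEquivOfIsCompl p.1.1 p.1.2 p.2.1)) (Sum.inl i)
        = (bp.1 i : Fin n → F) := fun i => by
      simp [Basis.map_apply, coe_prodEquivOfIsCompl', Basis.prod_apply_inl_fst,
        Basis.prod_apply_inl_snd]
    have h2 : ∀ i, ((bp.1.prod bp.2).map (prodEquivOfIsCompl p.1.1 p.1.2 p.2.1)) (Sum.inr i)
        = (bp.2 i : Fin n → F) := fun i => by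
      simp [Basis.map_apply, coe_prodEquivOfIsCompl', Basis.prod_apply_inr_fst,
        Basis.prod_apply_inr_snd]
    apply Subtype.ext
    apply Prod.ext
    · show span F _ = p.1.1
      have : (((bp.1.prod bp.2).map (prodEquivOfIsCompl p.1.1 p.1.2 p.2.1)) ∘ Sum.inl)
          = (p.1.1.subtype) ∘ bp.1 := funext fun i => h1 i
      rw [this, Set.range_comp, span_image, bp.1.span_eq, map_subtype_top]
    · show span F _ = p.1.2
      have : (((bp.1.prod bp.2).map (prodEquivOfIsCompl p.1.1 p.1.2 p.2.1)) ∘ Sum.inr)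
          = (p.1.2.subtype) ∘ bp.2 := funext fun i => h2 i
      rw [this, Set.range_comp, span_image, bp.2.span_eq, map_subtype_top]
  left_inv := by
    rintro ⟨b, hb⟩
    apply Subtype.ext
    apply Basis.eq_of_apply_eq
    rintro (i | i) <;>
      simp [Basis.map_apply, coe_prodEquivOfIsCompl', Basis.prod_apply_inl_fst,
        Basis.prod_apply_inl_snd, Basis.prod_apply_inr_fst, Basis.prod_apply_inr_snd,
        Basis.span_apply, LinearEquiv.coe_ofEq_apply] <;>
      rfl
  right_inv := by
    rintro ⟨bU, bW⟩
    apply Prod.ext <;>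
    · apply Basis.eq_of_apply_eq
      intro i
      apply Subtype.ext
      simp only [Basis.map_apply, LinearEquiv.coe_ofEq_apply, Basis.span_apply]
      simp [Basis.map_apply, coe_prodEquivOfIsCompl', Basis.prod_apply_inl_fst,
        Basis.prod_apply_inl_snd, Basis.prod_apply_inr_fst, Basis.prod_apply_inr_snd]
      rfl
lemma count_decomps (F : Type) [Field F] [Fintype F] (n j : ℕ) (hj : j ≤ n) :
    ∏ i ∈ Finset.range n, (Fintype.card F ^ n - Fintype.card F ^ i) =
      Nat.card {p : Submodule F (Fin n → F) × Submodule F (Fin n → F) //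
        IsCompl p.1 p.2 ∧ Module.finrank F p.1 = j} *
      ((∏ i ∈ Finset.range j, (Fintype.card F ^ j - Fintype.card F ^ i)) *
       ∏ i ∈ Finset.range (n-j), (Fintype.card F ^ (n-j) - Fintype.card F ^ i)) := by
  classical
  set S := {p : Submodule F (Fin n → F) × Submodule F (Fin n → F) //
        IsCompl p.1 p.2 ∧ Module.finrank F p.1 = j} with hS
  have er : Basis (Fin n) F (Fin n → F) ≃ Basis (Fin j ⊕ Fin (n-j)) F (Fin n → F) :=
    { toFun := fun b => b.reindex (finCongr (by omega : n = j + (n-j)) |>.trans finSumFinEquiv.symm)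
      invFun := fun b => b.reindex ((finCongr (by omega : n = j + (n-j)) |>.trans finSumFinEquiv.symm)).symm
      left_inv := fun b => Basis.eq_of_apply_eq fun i => by simp
      right_inv := fun b => Basis.eq_of_apply_eq fun i => by simp }
  have eU : ∀ p : S, Basis (Fin j) F p.1.1 ≃ Basis (Fin j) F (Fin j → F) := fun p =>
    basisCongr (LinearEquiv.ofFinrankEq _ _ (by simp [p.2.2]))
  have eW : ∀ p : S, Basis (Fin (n-j)) F p.1.2 ≃ Basis (Fin (n-j)) F (Fin (n-j) → F) := fun p =>
    basisCongr (LinearEquiv.ofFinrankEq _ _ (by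
      have := Submodule.finrank_add_eq_of_isCompl p.2.1
      simp only [Module.finrank_fintype_fun_eq_card, Fintype.card_fin] at this ⊢
      omega))
  have e : Basis (Fin n) F (Fin n → F) ≃
      S × (Basis (Fin j) F (Fin j → F) × Basis (Fin (n-j)) F (Fin (n-j) → F)) :=
    er.trans <| (Equiv.sigmaFiberEquiv decompOfBasis).symm.trans <|
      (Equiv.sigmaCongrRight fun p =>
        (fiberEquiv p).trans (Equiv.prodCongr (eU p) (eW p))).trans
      (Equiv.sigmaEquivProd _ _)
  rw [← card_basis_fun F n, Nat.card_congr e, Nat.card_prod, Nat.card_prod,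
    card_basis_fun, card_basis_fun]

lemma isCompl_of_idem {P : Matrix (Fin n) (Fin n) F} (hP : P * P = P) :
    IsCompl (range P.mulVecLin) (ker P.mulVecLin) := by
  have hcomp : P.mulVecLin ∘ₗ P.mulVecLin = P.mulVecLin := by
    rw [← Matrix.mulVecLin_mul, hP]
  have : IsProj (range P.mulVecLin) P.mulVecLin := by
    constructor
    · intro x; exact mem_range_self _ x
    · rintro x ⟨y, rfl⟩
      exact congrFun (congrArg DFunLike.coe hcomp) y
  exact this.isCompl

noncomputable def idemEquiv (F : Type) [Field F] (n j : ℕ) :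
    {P : Matrix (Fin n) (Fin n) F // P * P = P ∧ P.rank = j} ≃
      {p : Submodule F (Fin n → F) × Submodule F (Fin n → F) //
        IsCompl p.1 p.2 ∧ Module.finrank F p.1 = j} where
  toFun P := ⟨(range P.1.mulVecLin, ker P.1.mulVecLin), isCompl_of_idem P.2.1, P.2.2⟩
  invFun p :=
    ⟨LinearMap.toMatrix' (p.1.1.subtype ∘ₗ p.1.1.projectionOnto p.1.2 p.2.1), by
      have hππ : (p.1.1.subtype ∘ₗ p.1.1.projectionOnto p.1.2 p.2.1) ∘ₗ
          (p.1.1.subtype ∘ₗ p.1.1.projectionOnto p.1.2 p.2.1) =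
          p.1.1.subtype ∘ₗ p.1.1.projectionOnto p.1.2 p.2.1 := by
        ext x
        simp [Submodule.projectionOnto_apply_left, Submodule.projection_apply_of_mem_left,
          Submodule.projection_apply_mem]
      constructor
      · rw [← LinearMap.toMatrix'_mul, Module.End.mul_eq_comp, hππ]
      · rw [Matrix.rank, ← Matrix.toLin'_apply', Matrix.toLin'_toMatrix', range_comp,
          Submodule.range_projectionOnto, Submodule.map_subtype_top, p.2.2]⟩
  left_inv := by
    rintro ⟨P, hP, hr⟩
    apply Subtype.ext
    show LinearMap.toMatrix' _ = P
    have hcomp : P.mulVecLin ∘ₗ P.mulVecLin = P.mulVecLin := by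
      rw [← Matrix.mulVecLin_mul, hP]
    have key : (range P.mulVecLin).subtype ∘ₗ
        (range P.mulVecLin).projectionOnto (ker P.mulVecLin) (isCompl_of_idem hP)
        = P.mulVecLin := LinearMap.ext fun x => by
      have hx : x = (P.mulVecLin x : Fin n → F) + (x - P.mulVecLin x) := by abel
      have h1 : ((range P.mulVecLin).projectionOnto (ker P.mulVecLin) (isCompl_of_idem hP))
          (P.mulVecLin x) = ⟨P.mulVecLin x, mem_range_self _ x⟩ :=
        Submodule.projectionOnto_apply_left (isCompl_of_idem hP) ⟨P.mulVecLin x, mem_range_self _ x⟩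
      have h2 : ((range P.mulVecLin).projectionOnto (ker P.mulVecLin) (isCompl_of_idem hP))
          (x - P.mulVecLin x) = 0 := by
        apply Submodule.projectionOnto_apply_of_mem_right
        rw [mem_ker, map_sub, ← comp_apply, hcomp, sub_self]
      have h3 : ((range P.mulVecLin).projectionOnto (ker P.mulVecLin) (isCompl_of_idem hP)) x
          = ⟨P.mulVecLin x, mem_range_self _ x⟩ := by
        conv_lhs => rw [hx]
        rw [map_add, h1, h2, add_zero]
      show ((range P.mulVecLin).subtype)
          (((range P.mulVecLin).projectionOnto (ker P.mulVecLin) (isCompl_of_idem hP)) x)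
          = P.mulVecLin x
      rw [h3]
      rfl
    rw [key, ← Matrix.toLin'_apply', LinearMap.toMatrix'_toLin']
  right_inv := by
    rintro ⟨⟨U, W⟩, h, hU⟩
    apply Subtype.ext
    have hm : (LinearMap.toMatrix' (U.subtype ∘ₗ U.projectionOnto W h)).mulVecLin
        = U.subtype ∘ₗ U.projectionOnto W h := by
      rw [← Matrix.toLin'_apply', Matrix.toLin'_toMatrix']
    apply Prod.ext
    · show range _ = U
      rw [hm, range_comp, Submodule.range_projectionOnto, Submodule.map_subtype_top]
    · show ker _ = W
      rw [hm, ker_comp, ker_subtype, Submodule.comap_bot, Submodule.ker_projectionOnto]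

/-- The order of `GL_m(F_q)`. -/
def gma (q m : ℕ) : ℕ := ∏ i ∈ Finset.range m, (q ^ m - q ^ i)

lemma gma_pos (q m : ℕ) (hq : 1 < q) : 0 < gma q m := by
  apply Finset.prod_pos
  intro i hi
  have : q ^ i < q ^ m := Nat.pow_lt_pow_right hq (Finset.mem_range.1 hi)
  omega

/-- The number of `n × n` idempotent matrices over `F_q` of rank `j` equals
`γ_n / (γ_j γ_{n-j})`, the number of ordered direct sum decompositions
`F_q^n = U ⊕ W` with `dim U = j`. -/
theorem card_projections_of_rank (q n j : ℕ) (hj : j ≤ n)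
    (F : Type) [Field F] [Fintype F] (hF : Fintype.card F = q) :
    Nat.card {P : Matrix (Fin n) (Fin n) F // P * P = P ∧ P.rank = j} =
      Nat.card {p : Submodule F (Fin n → F) × Submodule F (Fin n → F) //
        IsCompl p.1 p.2 ∧ Module.finrank F p.1 = j} ∧
    (Nat.card {P : Matrix (Fin n) (Fin n) F // P * P = P ∧ P.rank = j} : ℚ) =
      (gma q n : ℚ) / (gma q j * gma q (n - j)) := by
  subst hF
  have hcard := Nat.card_congr (idemEquiv F n j)
  refine ⟨hcard, ?_⟩
  rw [hcard]
  have hq : 1 < Fintype.card F := Fintype.one_lt_card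
  have hcount := count_decomps F n j hj
  have hg : ∀ m, gma (Fintype.card F) m =
      ∏ i ∈ Finset.range m, (Fintype.card F ^ m - Fintype.card F ^ i) := fun m => rfl
  rw [← hg, ← hg, ← hg] at hcount
  have h1 : (0:ℚ) < gma (Fintype.card F) j := by exact_mod_cast gma_pos _ _ hq
  have h2 : (0:ℚ) < gma (Fintype.card F) (n-j) := by exact_mod_cast gma_pos _ _ hq
  have : (gma (Fintype.card F) n : ℚ) =
      (Nat.card {p : Submodule F (Fin n → F) × Submodule F (Fin n → F) //
        IsCompl p.1 p.2 ∧ Module.finrank F p.1 = j} : ℚ) *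
      (gma (Fintype.card F) j * gma (Fintype.card F) (n-j)) := by exact_mod_cast hcount
  field_simp
  linarith [this]
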